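/- Let φ be a real number with 0 < φ < π, and define x(ψ) = sin(ψ)/(2·cos(φ/2)·sin(ψ − φ/2)) for ψ ∈ [0, π] with ψ ≠ φ/2. Then x is strictly decreasing on the interval [0, φ/2), strictly decreasing on the interval (φ/2, π], satisfies x(ψ) < 0 for ψ ∈ (0, φ/2) and x(ψ) > 0 for ψ ∈ (φ/2, π). Consequently, x is injective on (0, π) \ {φ/2}. -/

import Mathlib

/-- For `0 < φ < π`, the function `x(ψ) = sin ψ/(2 cos(φ/2) sin(ψ − φ/2))` is strictly
decreasing on `[0, φ/2)` and on `(φ/2, π]`, negative on `(0, φ/2)`, positive on `(φ/2, π)`,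
and injective on `(0, π) \ {φ/2}`. -/
theorem stmt_4 (φ : ℝ) (h1 : 0 < φ) (h2 : φ < Real.pi) :
    let x : ℝ → ℝ := fun ψ => Real.sin ψ / (2 * Real.cos (φ / 2) * Real.sin (ψ - φ / 2))
    StrictAntiOn x (Set.Ico 0 (φ / 2)) ∧
    StrictAntiOn x (Set.Ioc (φ / 2) Real.pi) ∧
    (∀ ψ ∈ Set.Ioo 0 (φ / 2), x ψ < 0) ∧
    (∀ ψ ∈ Set.Ioo (φ / 2) Real.pi, 0 < x ψ) ∧
    Set.InjOn x (Set.Ioo 0 Real.pi \ {φ / 2}) := by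
  intro x
  have hpi := Real.pi_pos
  set a := φ / 2 with ha
  clear_value a
  have ha0 : 0 < a := by rw [ha]; positivity
  have hapi2 : a < Real.pi / 2 := by rw [ha]; linarith
  have hsa : 0 < Real.sin a := Real.sin_pos_of_pos_of_lt_pi ha0 (by linarith)
  have hca : 0 < Real.cos a := Real.cos_pos_of_mem_Ioo ⟨by linarith, hapi2⟩
  have key : ∀ s t : ℝ, Real.sin (s - a) ≠ 0 → Real.sin (t - a) ≠ 0 →
      x s - x t = Real.sin a * Real.sin (t - s) /
        (2 * Real.cos a * Real.sin (s - a) * Real.sin (t - a)) := by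
    intro s t hS hT
    have num : Real.sin s * Real.sin (t - a) - Real.sin t * Real.sin (s - a)
        = Real.sin a * Real.sin (t - s) := by
      simp only [Real.sin_sub]; ring
    have hc : Real.cos a ≠ 0 := hca.ne'
    simp only [x]
    rw [← ha]
    field_simp
    linear_combination num
  have anti : ∀ s t : ℝ, 0 < Real.sin (t - s) →
      0 < Real.sin (s - a) * Real.sin (t - a) → x t < x s := by
    intro s t hts hprod
    have hST := mul_ne_zero_iff.mp hprod.ne'
    have h := key s t hST.1 hST.2
    have : 0 < x s - x t := by
      rw [h]
      apply div_pos (by positivity)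
      have : 0 < 2 * Real.cos a := by positivity
      calc (0:ℝ) < 2 * Real.cos a * (Real.sin (s - a) * Real.sin (t - a)) :=
            mul_pos this hprod
        _ = 2 * Real.cos a * Real.sin (s - a) * Real.sin (t - a) := by ring
    linarith
  have anti1 : StrictAntiOn x (Set.Ico 0 a) := by
    intro s hs t ht hst
    apply anti s t
    · exact Real.sin_pos_of_pos_of_lt_pi (by linarith) (by
        have := hs.1; have := ht.2; linarith)
    · apply mul_pos_of_neg_of_neg
      · exact Real.sin_neg_of_neg_of_neg_pi_lt (by linarith [ht.2]) (by linarith [hs.1])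
      · exact Real.sin_neg_of_neg_of_neg_pi_lt (by linarith [ht.2]) (by linarith [hs.1, hst])
  have anti2 : StrictAntiOn x (Set.Ioc a Real.pi) := by
    intro s hs t ht hst
    apply anti s t
    · exact Real.sin_pos_of_pos_of_lt_pi (by linarith) (by
        have := hs.1; have := ht.2; linarith)
    · apply mul_pos
      · exact Real.sin_pos_of_pos_of_lt_pi (by linarith [hs.1]) (by linarith [hs.2, hst])
      · exact Real.sin_pos_of_pos_of_lt_pi (by linarith [hs.1, hst]) (by linarith [ht.2])
  have hneg : ∀ ψ ∈ Set.Ioo 0 a, x ψ < 0 := by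
    intro ψ hψ
    simp only [x]
    rw [← ha]
    apply div_neg_of_pos_of_neg
    · exact Real.sin_pos_of_pos_of_lt_pi hψ.1 (by linarith [hψ.2])
    · have : Real.sin (ψ - a) < 0 :=
        Real.sin_neg_of_neg_of_neg_pi_lt (by linarith [hψ.2]) (by linarith [hψ.1])
      nlinarith
  have hpos : ∀ ψ ∈ Set.Ioo a Real.pi, 0 < x ψ := by
    intro ψ hψ
    simp only [x]
    rw [← ha]
    apply div_pos
    · exact Real.sin_pos_of_pos_of_lt_pi (by linarith [hψ.1]) hψ.2
    · have : 0 < Real.sin (ψ - a) :=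
        Real.sin_pos_of_pos_of_lt_pi (by linarith [hψ.1]) (by linarith [hψ.2])
      positivity
  refine ⟨anti1, anti2, hneg, hpos, ?_⟩
  intro p hp q hq hpq
  obtain ⟨⟨hp0, hpπ⟩, hpa⟩ := hp
  obtain ⟨⟨hq0, hqπ⟩, hqa⟩ := hq
  simp only [Set.mem_singleton_iff] at hpa hqa
  rcases lt_or_gt_of_ne hpa with hp' | hp' <;> rcases lt_or_gt_of_ne hqa with hq' | hq'
  · exact anti1.injOn ⟨hp0.le, hp'⟩ ⟨hq0.le, hq'⟩ hpq
  · exact absurd hpq (by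
      have := hneg p ⟨hp0, hp'⟩
      have := hpos q ⟨hq', hqπ⟩
      linarith)
  · exact absurd hpq (by
      have := hpos p ⟨hp', hpπ⟩
      have := hneg q ⟨hq0, hq'⟩
      linarith)
  · exact anti2.injOn ⟨hp', hpπ.le⟩ ⟨hq', hqπ.le⟩ hpq
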